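/- arXiv:2406.01478 — 6 statements merged into one kernel-verified Lean document; each statement's English description precedes it below -/
import Mathlib

section
/- Let f : ℝ^d → ℝ be μ-strongly convex and differentiable with minimizer x*. Suppose points x, x̂, x⁺ ∈ ℝ^d, a step size η > 0, and a parameter α ∈ (0,1) satisfy (i) ‖x̂ - x + η∇f(x̂)‖ ≤ α√(1+2ημ)‖x̂ - x‖, and (ii) x⁺ = (1/(1+2ημ))(x - η∇f(x̂)) + (2ημ/(1+2ημ)) x̂. Then ‖x⁺ - x*‖² ≤ ‖x - x*‖²/(1+2ημ). -/
open scoped RealInnerProductSpace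

section Aux

variable {E : Type*} [NormedAddCommGroup E] [InnerProductSpace ℝ E] [CompleteSpace E]

/-- First-order condition for a differentiable convex function. -/
lemma aux_subgrad {f : E → ℝ} {g : E → E} (hg : ∀ z, HasGradientAt f (g z) z)
    (hc : ConvexOn ℝ Set.univ f) (x y : E) :
    f x + ⟪g x, y - x⟫ ≤ f y := by
  set φ : ℝ → ℝ := fun t => f (t • (y - x) + x) with hφ
  have hφc : ConvexOn ℝ Set.univ φ := by
    have h := hc.comp_affineMap (AffineMap.lineMap x y)
    have heq : φ = f ∘ (AffineMap.lineMap x y : ℝ →ᵃ[ℝ] E) := by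
      funext t
      simp only [φ, Function.comp_def, AffineMap.lineMap_apply_module]
      congr 1
      module
    rw [heq]
    simpa using h
  have hφd : ∀ t : ℝ, HasDerivAt φ (⟪g (t • (y - x) + x), y - x⟫) t := by
    intro t
    have hc' : HasDerivAt (fun t : ℝ => t • (y - x) + x) (y - x) t := by
      simpa using ((hasDerivAt_id t).smul_const (y - x)).add_const x
    have hF : HasFDerivAt f (InnerProductSpace.toDual ℝ E (g (t • (y - x) + x)))
        (t • (y - x) + x) := (hg _)
    have hcomp := hF.comp_hasDerivAt t hc'
    simp only [InnerProductSpace.toDual_apply_apply] at hcomp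
    exact hcomp
  have hslope := hφc.le_slope_of_hasDerivAt (Set.mem_univ (0:ℝ)) (Set.mem_univ (1:ℝ))
    one_pos (hφd 0)
  have h0 : φ 0 = f x := by simp [φ]
  have h1 : φ 1 = f y := by simp [φ]
  have hs : slope φ 0 1 = f y - f x := by
    simp [slope, h0, h1]
  rw [hs] at hslope
  have : (0:ℝ) • (y - x) + x = x := by simp
  rw [this] at hslope
  linarith

/-- Gradient of `μ/2 ‖·‖²`. -/
lemma aux_grad_quad (μ : ℝ) (z : E) :
    HasGradientAt (fun w : E => μ / 2 * ‖w‖ ^ 2) (μ • z) z := by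
  rw [hasGradientAt_iff_hasFDerivAt]
  have h1 : HasFDerivAt (fun w : E => ⟪w, w⟫)
      ((fderivInnerCLM ℝ (z, z)).comp ((ContinuousLinearMap.id ℝ E).prod
        (ContinuousLinearMap.id ℝ E))) z :=
    (hasFDerivAt_id z).inner ℝ (hasFDerivAt_id z)
  have h2 : HasFDerivAt (fun w : E => μ / 2 * ⟪w, w⟫)
      ((μ / 2) • ((fderivInnerCLM ℝ (z, z)).comp ((ContinuousLinearMap.id ℝ E).prod
        (ContinuousLinearMap.id ℝ E)))) z := h1.const_smul (μ / 2)
  have heq : (fun w : E => μ / 2 * ‖w‖ ^ 2) = fun w : E => μ / 2 * ⟪w, w⟫ := by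
    funext w
    rw [real_inner_self_eq_norm_sq]
  rw [heq]
  refine h2.congr_fderiv ?_
  ext v
  simp [InnerProductSpace.toDual_apply_apply, fderivInnerCLM_apply, real_inner_smul_left,
    real_inner_comm z v]
  ring

/-- Strong convexity first-order condition. -/
lemma aux_strong_first_order {f : E → ℝ} {μ : ℝ}
    (hf : Differentiable ℝ f) (hsc : StrongConvexOn Set.univ μ f) (u v : E) :
    f u + ⟪gradient f u, v - u⟫ + μ / 2 * ‖v - u‖ ^ 2 ≤ f v := by
  set g : E → ℝ := fun z => f z - μ / 2 * ‖z‖ ^ 2 with hg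
  have hgc : ConvexOn ℝ Set.univ g := strongConvexOn_iff_convex.mp hsc
  have hgd : ∀ z, HasGradientAt g (gradient f z - μ • z) z := by
    intro z
    have h1 := (hf z).hasGradientAt
    have h2 := aux_grad_quad μ z
    rw [hasGradientAt_iff_hasFDerivAt] at h1 h2 ⊢
    have h3 := h1.sub h2
    rw [map_sub]
    exact h3
  have := aux_subgrad hgd hgc u v
  simp only [hg] at this
  have hin : ⟪gradient f u - μ • u, v - u⟫
      = ⟪gradient f u, v - u⟫ - μ * ⟪u, v - u⟫ := by
    rw [inner_sub_left, real_inner_smul_left]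
  have hnorm : ‖v - u‖ ^ 2 = ‖v‖ ^ 2 - 2 * ⟪v, u⟫ + ‖u‖ ^ 2 := norm_sub_sq_real v u
  have hvu : ⟪u, v - u⟫ = ⟪v, u⟫ - ‖u‖ ^ 2 := by
    rw [inner_sub_right, real_inner_self_eq_norm_sq, real_inner_comm]
  rw [hin, hvu] at this
  rw [hnorm]
  ring_nf at this ⊢
  linarith

end Aux

set_option maxHeartbeats 1000000 in
/-- Hybrid proximal extragradient step contraction for strongly convex `f`. -/
theorem stmt_0 {d : ℕ} (f : EuclideanSpace ℝ (Fin d) → ℝ) (μ η α : ℝ)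
    (xstar x xhat xplus : EuclideanSpace ℝ (Fin d))
    (hμ : 0 < μ) (hη : 0 < η) (hα : α ∈ Set.Ioo (0:ℝ) 1)
    (hf : Differentiable ℝ f)
    (hsc : StrongConvexOn Set.univ μ f)
    (hmin : ∀ y, f xstar ≤ f y)
    (hprox : ‖xhat - x + η • gradient f xhat‖ ≤ α * Real.sqrt (1 + 2*η*μ) * ‖xhat - x‖)
    (hupd : xplus = (1/(1+2*η*μ)) • (x - η • gradient f xhat)
              + (2*η*μ/(1+2*η*μ)) • xhat) :
    ‖xplus - xstar‖^2 ≤ ‖x - xstar‖^2 / (1 + 2*η*μ) := by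
  set G := gradient f xhat with hG
  set s : ℝ := 1 + 2*η*μ with hsdef
  have hs : (0:ℝ) < s := by positivity
  have hs1 : (1:ℝ) ≤ s := by nlinarith
  -- gradient vanishes at the minimizer
  have hgrad0 : gradient f xstar = 0 := by
    have hloc : IsLocalMin f xstar := Filter.Eventually.of_forall hmin
    have := hloc.fderiv_eq_zero
    unfold gradient
    rw [this]
    simp
  -- key strong convexity inequality
  have key1 : μ * ‖xhat - xstar‖ ^ 2 ≤ ⟪G, xhat - xstar⟫ := by
    have hA := aux_strong_first_order hf hsc xhat xstar
    have hB := aux_strong_first_order hf hsc xstar xhat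
    rw [hgrad0] at hB
    simp only [inner_zero_left] at hB
    have hflip : ⟪G, xstar - xhat⟫ = - ⟪G, xhat - xstar⟫ := by
      rw [← inner_neg_right]; congr 1; abel
    rw [hflip] at hA
    have hnn : ‖xstar - xhat‖ = ‖xhat - xstar‖ := norm_sub_rev _ _
    rw [hnn] at hA
    nlinarith
  -- rewrite the update
  set e := xhat - x + η • G with he
  have hxp : s • (xplus - xstar) = s • (xhat - xstar) - e := by
    rw [hupd, he, hsdef]
    match_scalars <;> field_simp <;> ring
  -- prox error bound
  have key2 : ‖e‖ ^ 2 ≤ α ^ 2 * s * ‖xhat - x‖ ^ 2 := by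
    have h1 : ‖e‖ ≤ α * Real.sqrt s * ‖xhat - x‖ := hprox
    have h2 : (0:ℝ) ≤ α * Real.sqrt s * ‖xhat - x‖ :=
      mul_nonneg (mul_nonneg hα.1.le (Real.sqrt_nonneg _)) (norm_nonneg _)
    have := mul_self_le_mul_self (norm_nonneg e) h1
    have hsq : Real.sqrt s * Real.sqrt s = s := Real.mul_self_sqrt hs.le
    nlinarith
  -- expand norms
  have hEq : s^2 * ‖xplus - xstar‖^2
      = s^2 * ‖xhat - xstar‖^2 - 2*(s*⟪xhat - xstar, e⟫) + ‖e‖^2 := by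
    have h1 : ‖s • (xplus - xstar)‖^2 = s^2 * ‖xplus - xstar‖^2 := by
      rw [norm_smul, Real.norm_eq_abs, mul_pow, sq_abs]
    rw [← h1, hxp, norm_sub_sq_real, real_inner_smul_left, norm_smul, Real.norm_eq_abs,
      mul_pow, sq_abs]
  have hxw : x - xstar = (xhat - xstar) - (xhat - x) := by abel
  have hexp2 : ‖x - xstar‖ ^ 2
      = ‖xhat - xstar‖ ^ 2 - 2 * ⟪xhat - xstar, xhat - x⟫ + ‖xhat - x‖ ^ 2 := by
    rw [hxw, norm_sub_sq_real]
  have hie : ⟪xhat - xstar, e⟫ = ⟪xhat - xstar, xhat - x⟫ + η * ⟪G, xhat - xstar⟫ := by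
    rw [he, inner_add_right, real_inner_smul_right, real_inner_comm G (xhat - xstar)]
  have main : s^2 * ‖xplus - xstar‖^2 ≤ s * ‖x - xstar‖^2 := by
    rw [hEq, hexp2, hie]
    simp only [hsdef] at key1 key2 ⊢
    have F1 := mul_le_mul_of_nonneg_left key1 (by positivity : (0:ℝ) ≤ 2*η*(1+2*η*μ))
    have hα2 : α^2 ≤ 1 := by nlinarith [hα.1, hα.2]
    have F3 : α^2*((1+2*η*μ)*‖xhat - x‖^2) ≤ (1+2*η*μ)*‖xhat - x‖^2 := by
      nlinarith [mul_nonneg (sub_nonneg.mpr hα2)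
        (mul_nonneg (by positivity : (0:ℝ) ≤ 1+2*η*μ) (sq_nonneg ‖xhat - x‖))]
    linarith [F1, key2, F3]
  rw [le_div_iff₀ (by positivity : (0:ℝ) < 1+2*η*μ)]
  simp only [hsdef] at main hs
  nlinarith [main, hs]
end

section
/- Under the same hypotheses as the hybrid proximal extragradient step (f μ-strongly convex differentiable with minimizer x*, ‖x̂ - x + η∇f(x̂)‖ ≤ α√(1+2ημ)‖x̂ - x‖ with α ∈ (0,1), and x⁺ = (1/(1+2ημ))(x - η∇f(x̂)) + (2ημ/(1+2ημ)) x̂), the midpoint satisfies ‖x - x̂‖ ≤ ‖x - x*‖/√(1-α²). -/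
set_option maxHeartbeats 1000000


open scoped RealInnerProductSpace

/-- First-order condition for a convex function on the whole space. -/
lemma convex_first_order {E : Type*} [NormedAddCommGroup E] [NormedSpace ℝ E]
    {g : E → ℝ} {g' : E →L[ℝ] ℝ} (hg : ConvexOn ℝ Set.univ g) {a b : E}
    (hd : HasFDerivAt g g' a) : g a + g' (b - a) ≤ g b := by
  have h1 : HasDerivAt (fun t : ℝ => t • (b - a) + a) (b - a) 0 := by
    simpa using ((hasDerivAt_id (0:ℝ)).smul_const (b - a)).add_const a
  have h2 : HasFDerivAt g g' ((0:ℝ) • (b - a) + a) := by simpa using hd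
  have hline : HasDerivAt (fun t : ℝ => g (t • (b - a) + a)) (g' (b - a)) 0 := by
    exact h2.comp_hasDerivAt (0:ℝ) h1
  have hφ : ConvexOn ℝ Set.univ (fun t : ℝ => g (t • (b - a) + a)) := by
    have h := hg.comp_affineMap (AffineMap.lineMap a b : ℝ →ᵃ[ℝ] E)
    have heq : (fun t : ℝ => g (t • (b - a) + a)) = g ∘ (AffineMap.lineMap a b : ℝ →ᵃ[ℝ] E) := by
      funext t
      simp only [Function.comp_apply, AffineMap.lineMap_apply, vadd_eq_add, vsub_eq_sub]
    rw [heq]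
    simpa only [Set.preimage_univ] using h
  have hs := hφ.le_slope_of_hasDerivAt (Set.mem_univ (0:ℝ)) (Set.mem_univ (1:ℝ))
    zero_lt_one hline
  have : slope (fun t : ℝ => g (t • (b - a) + a)) 0 1 = g b - g a := by
    simp [slope_def_field]
  rw [this] at hs
  linarith

/-- Midpoint bound in the hybrid proximal extragradient step. -/
theorem stmt_1 {d : ℕ} (f : EuclideanSpace ℝ (Fin d) → ℝ) (μ η α : ℝ)
    (xstar x xhat xplus : EuclideanSpace ℝ (Fin d))
    (hμ : 0 < μ) (hη : 0 < η) (hα : α ∈ Set.Ioo (0:ℝ) 1)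
    (hf : Differentiable ℝ f)
    (hsc : StrongConvexOn Set.univ μ f)
    (hmin : ∀ y, f xstar ≤ f y)
    (hprox : ‖xhat - x + η • gradient f xhat‖ ≤ α * Real.sqrt (1 + 2*η*μ) * ‖xhat - x‖)
    (hupd : xplus = (1/(1+2*η*μ)) • (x - η • gradient f xhat)
              + (2*η*μ/(1+2*η*μ)) • xhat) :
    ‖x - xhat‖ ≤ ‖x - xstar‖ / Real.sqrt (1 - α^2) := by
  obtain ⟨hα0, hα1⟩ := hα
  -- notation
  set G : EuclideanSpace ℝ (Fin d) := gradient f xhat with hG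
  -- the convex shifted function
  set g : EuclideanSpace ℝ (Fin d) → ℝ := fun z => f z - μ / 2 * ‖z‖ ^ 2 with hgdef
  have hgconv : ConvexOn ℝ Set.univ g := strongConvexOn_iff_convex.mp hsc
  -- derivative of g at any point
  have hgderiv : ∀ z : EuclideanSpace ℝ (Fin d), HasFDerivAt g
      ((InnerProductSpace.toDual ℝ (EuclideanSpace ℝ (Fin d)) (gradient f z))
        - (μ/2) • (2 • (innerSL ℝ z))) z := by
    intro z
    have h1 : HasFDerivAt f
        (InnerProductSpace.toDual ℝ (EuclideanSpace ℝ (Fin d)) (gradient f z)) z :=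
      ((hf z).hasGradientAt).hasFDerivAt
    have h2 : HasFDerivAt (fun w : EuclideanSpace ℝ (Fin d) => μ / 2 * ‖w‖ ^ 2) ((μ/2) • (2 • (innerSL ℝ z))) z := by
      simpa using ((hasFDerivAt_id z).norm_sq).const_mul (μ/2)
    exact h1.sub h2
  -- gradient at minimizer is zero
  have hgradstar : gradient f xstar = 0 := by
    have hloc : IsLocalMin f xstar := Filter.Eventually.of_forall hmin
    have := hloc.fderiv_eq_zero
    simp only [gradient, this, map_zero]
  -- strong monotonicity at minimizer
  have key : μ * ‖xhat - xstar‖ ^ 2 ≤ ⟪G, xhat - xstar⟫ := by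
    have i1 := convex_first_order hgconv (a := xhat) (b := xstar) (hgderiv xhat)
    have i2 := convex_first_order hgconv (a := xstar) (b := xhat) (hgderiv xstar)
    simp only [ContinuousLinearMap.sub_apply, ContinuousLinearMap.smul_apply,
      ContinuousLinearMap.smul_apply, InnerProductSpace.toDual_apply_apply, hgradstar,
      inner_zero_left, smul_eq_mul, hgdef] at i1 i2
    simp only [innerSL_apply_apply, inner_sub_right, nsmul_eq_mul, smul_eq_mul, Nat.cast_ofNat] at i1 i2
    have hxx : ⟪xhat, xhat⟫ = ‖xhat‖^2 := real_inner_self_eq_norm_sq _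
    have hss : ⟪xstar, xstar⟫ = ‖xstar‖^2 := real_inner_self_eq_norm_sq _
    have hcm : ⟪xstar, xhat⟫ = ⟪xhat, xstar⟫ := real_inner_comm _ _
    rw [hcm, hss] at i2
    rw [hxx] at i1
    rw [hG, inner_sub_right, norm_sub_sq_real]
    ring_nf at i1 i2 ⊢
    linarith [i1, i2]
  -- abbreviations
  set u : EuclideanSpace ℝ (Fin d) := xhat - x with hu
  set v : EuclideanSpace ℝ (Fin d) := xhat - xstar with hv
  set e : EuclideanSpace ℝ (Fin d) := xhat - x + η • G with he
  have hc1 : (0:ℝ) < 1 + 2*η*μ := by nlinarith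
  -- square the prox inequality
  have hesq : ‖e‖ ^ 2 ≤ α ^ 2 * (1 + 2*η*μ) * ‖u‖ ^ 2 := by
    have h := mul_self_le_mul_self (norm_nonneg e) hprox
    have hs : Real.sqrt (1 + 2*η*μ) ^ 2 = 1 + 2*η*μ := Real.sq_sqrt (le_of_lt hc1)
    nlinarith [Real.sqrt_nonneg (1 + 2*η*μ), norm_nonneg u, norm_nonneg e]
  -- inner product decomposition
  have huv : ⟪u, v⟫ = ⟪e, v⟫ - η * ⟪G, v⟫ := by
    have : u = e - η • G := by rw [he, hu]; abel
    rw [this, inner_sub_left, real_inner_smul_left]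
  have hGv : μ * ‖v‖ ^ 2 ≤ ⟪G, v⟫ := by rw [hv]; exact key
  have hev : ⟪e, v⟫ ≤ ‖e‖ * ‖v‖ := real_inner_le_norm e v
  -- Young's inequality
  have hyoung : 2 * (‖e‖ * ‖v‖) ≤ ‖e‖^2 / (1 + 2*η*μ) + (1 + 2*η*μ) * ‖v‖^2 := by
    rw [div_add' _ _ _ (ne_of_gt hc1), le_div_iff₀ hc1]
    nlinarith [sq_nonneg (‖e‖ - (1 + 2*η*μ) * ‖v‖)]
  -- main quadratic bound
  have hmain : (1 - α^2) * ‖u‖^2 ≤ ‖x - xstar‖^2 := by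
    have hexp : ‖x - xstar‖^2 = ‖v‖^2 - 2 * ⟪u, v⟫ + ‖u‖^2 := by
      have hxv : x - xstar = v - u := by rw [hv, hu]; abel
      rw [hxv, norm_sub_sq_real, real_inner_comm v u]
    have hdiv : ‖e‖^2 / (1 + 2*η*μ) ≤ α^2 * ‖u‖^2 := by
      rw [div_le_iff₀ hc1]; nlinarith
    nlinarith [norm_nonneg v, sq_nonneg ‖v‖]
  -- conclude
  have hα2 : (0:ℝ) < 1 - α^2 := by nlinarith
  have hsq : Real.sqrt (1 - α^2) > 0 := Real.sqrt_pos.mpr hα2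
  rw [le_div_iff₀ hsq]
  have hxu : ‖x - xhat‖ = ‖u‖ := by rw [hu, norm_sub_rev]
  have h1 : (‖x - xhat‖ * Real.sqrt (1 - α^2))^2 ≤ ‖x - xstar‖^2 := by
    rw [mul_pow, Real.sq_sqrt (le_of_lt hα2), hxu]
    linarith [hmain]
  have h2 := Real.sqrt_le_sqrt h1
  rwa [Real.sqrt_sq (by positivity), Real.sqrt_sq (norm_nonneg _)] at h2
end

section
/- Let g : ℝ^d → ℝ^d and H̃ ∈ ℝ^{d×d}, and suppose x̃, x, η̃ > 0, μ > 0, α ∈ (0,1) satisfy x̃ - x = -η̃(g(x) + H̃(x̃ - x)) and ‖x̃ - x + η̃ g(x̃)‖ > α√(1+2η̃μ)‖x̃ - x‖. Then for η = βη̃ with β ∈ (0,1), both η > αβ‖x̃ - x‖ / ‖g(x̃) - g(x) - H̃(x̃ - x)‖ and η > 2α²βμ‖x̃ - x‖² / ‖g(x̃) - g(x) - H̃(x̃ - x)‖² hold. -/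
/-- Step-size lower bounds when the line-search condition is violated. -/
theorem stmt_2 {d : ℕ} (g : EuclideanSpace ℝ (Fin d) → EuclideanSpace ℝ (Fin d))
    (H : EuclideanSpace ℝ (Fin d) →L[ℝ] EuclideanSpace ℝ (Fin d))
    (x xt : EuclideanSpace ℝ (Fin d)) (ηt μ α β η : ℝ)
    (hηt : 0 < ηt) (hμ : 0 < μ) (hα : α ∈ Set.Ioo (0:ℝ) 1) (hβ : β ∈ Set.Ioo (0:ℝ) 1)
    (hdef : xt - x = -(ηt • (g x + H (xt - x))))
    (hviol : α * Real.sqrt (1 + 2*ηt*μ) * ‖xt - x‖ < ‖xt - x + ηt • g xt‖)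
    (hne : g xt - g x - H (xt - x) ≠ 0)
    (hη : η = β * ηt) :
    α*β*‖xt - x‖ / ‖g xt - g x - H (xt - x)‖ < η ∧
    2*α^2*β*μ*‖xt - x‖^2 / ‖g xt - g x - H (xt - x)‖^2 < η := by
  obtain ⟨hα0, hα1⟩ := hα
  obtain ⟨hβ0, hβ1⟩ := hβ
  set r := g xt - g x - H (xt - x) with hr
  have hrpos : 0 < ‖r‖ := norm_pos_iff.mpr hne
  have key : xt - x + ηt • g xt = ηt • r := by
    rw [hr]
    linear_combination (norm := module) hdef
  have hkey : ‖xt - x + ηt • g xt‖ = ηt * ‖r‖ := by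
    rw [key, norm_smul, Real.norm_eq_abs, abs_of_pos hηt]
  rw [hkey] at hviol
  have hs1 : (1:ℝ) ≤ Real.sqrt (1 + 2*ηt*μ) := by
    have := Real.sqrt_le_sqrt (show (1:ℝ) ≤ 1 + 2*ηt*μ by nlinarith)
    simpa using this
  have hΔ : 0 ≤ ‖xt - x‖ := norm_nonneg _
  constructor
  · rw [div_lt_iff₀ hrpos, hη]
    nlinarith [mul_le_mul_of_nonneg_right hs1 (mul_nonneg hα0.le hΔ)]
  · rw [div_lt_iff₀ (by positivity), hη]
    have hsq : (α * Real.sqrt (1 + 2*ηt*μ) * ‖xt - x‖)^2 < (ηt * ‖r‖)^2 := by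
      apply sq_lt_sq' _ hviol
      nlinarith [mul_le_mul_of_nonneg_right hs1 (mul_nonneg hα0.le hΔ)]
    have hsqrt : Real.sqrt (1 + 2*ηt*μ) ^ 2 = 1 + 2*ηt*μ := by
      rw [Real.sq_sqrt]; nlinarith
    have h2 : α^2 * (1 + 2*ηt*μ) * ‖xt - x‖^2 < ηt^2 * ‖r‖^2 := by
      rw [mul_pow, mul_pow, hsqrt] at hsq
      nlinarith [hsq]
    have h3 : 2 * μ * α^2 * ‖xt - x‖^2 < ηt * ‖r‖^2 := by
      have h4 : ηt * (2 * μ * α^2 * ‖xt - x‖^2) < ηt * (ηt * ‖r‖^2) := by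
        nlinarith [mul_nonneg (sq_nonneg α) (sq_nonneg ‖xt - x‖)]
      exact (mul_lt_mul_iff_right₀ hηt).mp h4
    have h5 := mul_lt_mul_of_pos_left h3 hβ0
    calc 2*α^2*β*μ*‖xt - x‖^2 = β * (2 * μ * α^2 * ‖xt - x‖^2) := by ring
      _ < β * (ηt * ‖r‖^2) := h5
      _ = β * ηt * ‖r‖^2 := by ring
end

section
/- Let H̃ ∈ ℝ^{d×d} be a symmetric positive semidefinite matrix, g ∈ ℝ^d, and let 0 < η ≤ η̃. Define x̂ = x - η(I + ηH̃)^{-1}g and x̃ = x - η̃(I + η̃H̃)^{-1}g. Then ‖x̃ - x‖ ≤ (η̃/η)‖x̂ - x‖. -/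
open scoped RealInnerProductSpace

/-- Monotonicity of regularized Newton step lengths in the step size. -/
theorem stmt_3 {d : ℕ}
    (H : EuclideanSpace ℝ (Fin d) →L[ℝ] EuclideanSpace ℝ (Fin d))
    (hsym : ∀ u v, ⟪H u, v⟫ = ⟪u, H v⟫)
    (hpsd : ∀ v, 0 ≤ ⟪H v, v⟫)
    (g x xhat xt : EuclideanSpace ℝ (Fin d)) (η ηt : ℝ)
    (hη : 0 < η) (hle : η ≤ ηt)
    (hxhat : xhat - x + η • H (xhat - x) = -(η • g))
    (hxt : xt - x + ηt • H (xt - x) = -(ηt • g)) :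
    ‖xt - x‖ ≤ (ηt/η) * ‖xhat - x‖ := by
  have hηt : 0 < ηt := lt_of_lt_of_le hη hle
  set u := xhat - x with hu
  set v := xt - x with hv
  have e3 : ηt • u - η • v + (η*ηt) • H (u - v) = 0 := by
    rw [map_sub]
    linear_combination (norm := module) ηt • hxhat - η • hxt
  have hkey : ηt * ⟪u, u - v⟫ - η * ⟪v, u - v⟫ + (η*ηt) * ⟪H (u-v), u-v⟫ = 0 := by
    have h := congrArg (fun z => ⟪z, u - v⟫) e3
    simp only [inner_add_left, inner_sub_left, real_inner_smul_left, inner_zero_left] at h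
    linarith
  have hpsd' := hpsd (u - v)
  have hcs : ⟪u, v⟫ ≤ ‖u‖ * ‖v‖ := real_inner_le_norm u v
  have hexp : ⟪u, u - v⟫ = ‖u‖^2 - ⟪u,v⟫ := by
    rw [inner_sub_right, real_inner_self_eq_norm_sq]
  have hexp2 : ⟪v, u - v⟫ = ⟪u,v⟫ - ‖v‖^2 := by
    rw [inner_sub_right, real_inner_self_eq_norm_sq, real_inner_comm]
  have h1 : ηt * ‖u‖^2 + η * ‖v‖^2 ≤ (η + ηt) * (‖u‖ * ‖v‖) := by
    nlinarith [mul_nonneg (mul_nonneg hη.le hηt.le) hpsd']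
  rw [div_mul_eq_mul_div, le_div_iff₀ hη]
  rcases le_total ‖v‖ ‖u‖ with hc | hc
  · nlinarith [mul_nonneg (sub_nonneg.2 hle) (norm_nonneg v)]
  · nlinarith [mul_nonneg (sub_nonneg.2 hc) (sub_nonneg.2 hle),
      mul_nonneg (sub_nonneg.2 hle) (norm_nonneg u)]
end

section
/- Let (η_t)_{t≥0} be a sequence of positive reals, β ∈ (0, 1/2], σ₀ > 0, and let φ(t) = C√(log(d(t+1)/δ)/(t+1)) for constants C > 0, d ≥ 1, δ ∈ (0,1) with d/δ ≥ e. Suppose that for every t ≥ 0, either η_t ≥ αβ/(2M₁ + φ(t)) or η_t = σ_t, where σ₀ is given and σ_{t+1} = η_t/β. Then for all t ≥ 0, η_t ≥ min{ αβ/(2M₁ + φ(t)), σ₀/β^t }. -/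
/-- Inductive step-size lower bound for the uniform-averaging SNPE line search. -/
theorem stmt_8 (α β σ₀ M₁ C dd δ : ℝ) (η σ : ℕ → ℝ) (φ : ℕ → ℝ)
    (hα : α ∈ Set.Ioo (0:ℝ) 1) (hβ0 : 0 < β) (hβ : β ≤ 1/2)
    (hσ₀ : 0 < σ₀) (hM : 0 < M₁) (hC : 0 < C)
    (hd : 1 ≤ dd) (hδ : δ ∈ Set.Ioo (0:ℝ) 1) (hde : Real.exp 1 ≤ dd/δ)
    (hφ : ∀ t : ℕ, φ t = C * Real.sqrt (Real.log (dd*(t+1)/δ) / (t+1)))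
    (hηpos : ∀ t, 0 < η t)
    (hσ0 : σ 0 = σ₀) (hσrec : ∀ t, σ (t+1) = η t / β)
    (halt : ∀ t, α*β/(2*M₁ + φ t) ≤ η t ∨ η t = σ t) :
    ∀ t, min (α*β/(2*M₁ + φ t)) (σ₀/β^t) ≤ η t := by
  obtain ⟨hα0, hα1⟩ := hα
  obtain ⟨hδ0, hδ1⟩ := hδ
  have hφnn : ∀ t, 0 ≤ φ t := by
    intro t
    rw [hφ t]
    positivity
  have hden : ∀ t, 0 < 2*M₁ + φ t := by
    intro t
    have := hφnn t
    linarith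
  -- key : β * φ t ≤ φ (t+1)
  have hkey : ∀ t : ℕ, β * φ t ≤ φ (t+1) := by
    intro t
    rw [hφ t, hφ (t+1)]
    have ht1 : (0:ℝ) < (t:ℝ)+1 := by positivity
    have ht2 : (0:ℝ) < (t:ℝ)+1+1 := by positivity
    set L := Real.log (dd*((t:ℝ)+1+1)/δ) with hLdef
    have hL1 : (0:ℝ) ≤ L := by
      apply Real.log_nonneg
      have h1 : (1:ℝ) ≤ dd*((t:ℝ)+1+1) := by nlinarith
      calc (1:ℝ) ≤ dd*((t:ℝ)+1+1) := h1
        _ ≤ dd*((t:ℝ)+1+1)/δ := by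
            rw [le_div_iff₀ hδ0]; nlinarith
    have hLmono : Real.log (dd*((t:ℝ)+1)/δ) ≤ L := by
      apply Real.log_le_log (by positivity)
      have hnum : dd*((t:ℝ)+1) ≤ dd*((t:ℝ)+1+1) := by nlinarith
      exact (div_le_div_iff_of_pos_right hδ0).mpr hnum
    have hratio : Real.log (dd*((t:ℝ)+1)/δ) / ((t:ℝ)+1)
        ≤ 4 * (L / ((t:ℝ)+1+1)) := by
      rw [div_le_iff₀ ht1]
      have hq : (0:ℝ) ≤ L/((t:ℝ)+1+1) := by positivity
      have h3 : L ≤ 4 * (L / ((t:ℝ)+1+1)) * ((t:ℝ)+1) := by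
        calc L = L/((t:ℝ)+1+1) * ((t:ℝ)+1+1) :=
              (div_mul_cancel₀ _ (ne_of_gt ht2)).symm
          _ ≤ L/((t:ℝ)+1+1) * (4*((t:ℝ)+1)) := by nlinarith
          _ = 4 * (L/((t:ℝ)+1+1)) * ((t:ℝ)+1) := by ring
      linarith
    have hsq : Real.sqrt (Real.log (dd*((t:ℝ)+1)/δ) / ((t:ℝ)+1))
        ≤ 2 * Real.sqrt (L / ((t:ℝ)+1+1)) := by
      have h4 : Real.sqrt (Real.log (dd*((t:ℝ)+1)/δ) / ((t:ℝ)+1))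
          ≤ Real.sqrt (4 * (L / ((t:ℝ)+1+1))) :=
        Real.sqrt_le_sqrt hratio
      rw [show (4:ℝ) = 2^2 by norm_num, Real.sqrt_mul (by positivity),
        Real.sqrt_sq (by norm_num : (0:ℝ) ≤ 2)] at h4
      exact h4
    push_cast
    calc β * (C * Real.sqrt (Real.log (dd*((t:ℝ)+1)/δ) / ((t:ℝ)+1)))
        ≤ (1/2) * (C * Real.sqrt (Real.log (dd*((t:ℝ)+1)/δ) / ((t:ℝ)+1))) := by
          apply mul_le_mul_of_nonneg_right hβ (by positivity)
      _ ≤ C * Real.sqrt (L / ((t:ℝ)+1+1)) := by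
          nlinarith [hsq, Real.sqrt_nonneg (Real.log (dd*((t:ℝ)+1)/δ) / ((t:ℝ)+1)), hC.le]
  intro t
  induction t with
  | zero =>
      rcases halt 0 with h | h
      · exact le_trans (min_le_left _ _) h
      · have : η 0 = σ₀ := by rw [h, hσ0]
        rw [this]
        simpa using min_le_right (α*β/(2*M₁ + φ 0)) σ₀
  | succ t ih =>
      rcases halt (t+1) with h | h
      · exact le_trans (min_le_left _ _) h
      · rw [h, hσrec t]
        have hA : α*β/(2*M₁ + φ (t+1)) ≤ (α*β/(2*M₁ + φ t)) / β := by
          rw [div_div, div_le_div_iff₀ (hden (t+1)) (mul_pos (hden t) hβ0)]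
          have h1 : β * (2*M₁ + φ t) ≤ 2*M₁ + φ (t+1) := by
            have := hkey t
            nlinarith
          nlinarith [mul_le_mul_of_nonneg_left h1 (le_of_lt (mul_pos hα0 hβ0))]
        have hB : σ₀/β^(t+1) = (σ₀/β^t)/β := by
          rw [div_div, pow_succ]
        have hle : min (α*β/(2*M₁ + φ (t+1))) (σ₀/β^(t+1))
            ≤ (min (α*β/(2*M₁ + φ t)) (σ₀/β^t)) / β := by
          rcases le_total (α*β/(2*M₁ + φ t)) (σ₀/β^t) with hc | hc
          · rw [min_eq_left hc]
            exact le_trans (min_le_left _ _) hA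
          · rw [min_eq_right hc, ← hB]
            exact min_le_right _ _
        refine le_trans hle ?_
        gcongr
end

section
/- For the Lambert W function (principal branch), e^{W(x)} ≤ (2x+1)/(1+log(x+1)) holds for all x ≥ 0. -/
lemma lemA (t : ℝ) (ht : 1 ≤ t) :
    (1 - Real.log t)*t^2 + (Real.log t - 2)*t + 1 ≤ 0 := by
  set f : ℝ → ℝ := fun t => (1 - Real.log t)*t^2 + (Real.log t - 2)*t + 1 with hf
  have hderiv : ∀ s : ℝ, 0 < s → HasDerivAt f (s - 2*s*Real.log s + Real.log s - 1) s := by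
    intro s hs
    have hlog := Real.hasDerivAt_log (ne_of_gt hs)
    have h1 : HasDerivAt (fun t : ℝ => (1 - Real.log t)*t^2)
        ((-s⁻¹) * s^2 + (1 - Real.log s) * (2*s)) s := by
      have := ((hasDerivAt_const s 1).sub hlog).mul (hasDerivAt_pow 2 s)
      refine this.congr_deriv ?_
      push_cast
      simp only [Pi.sub_apply]
      ring
    have h2 : HasDerivAt (fun t : ℝ => (Real.log t - 2)*t)
        (s⁻¹ * s + (Real.log s - 2) * 1) s := by
      exact ((hlog.sub (hasDerivAt_const s 2)).mul (hasDerivAt_id s)).congr_deriv (by simp)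
    have h3 := (h1.add h2).add_const 1
    refine h3.congr_deriv ?_
    field_simp
    ring
  have key : AntitoneOn f (Set.Ici 1) := by
    apply antitoneOn_of_deriv_nonpos (convex_Ici 1)
    · intro s hs
      have hs0 : (0:ℝ) < s := lt_of_lt_of_le one_pos hs
      exact (hderiv s hs0).continuousAt.continuousWithinAt
    · intro s hs
      rw [interior_Ici] at hs
      have hs0 : (0:ℝ) < s := lt_trans one_pos hs
      exact (hderiv s hs0).differentiableAt.differentiableWithinAt
    · intro s hs
      rw [interior_Ici] at hs
      have hs0 : (0:ℝ) < s := lt_trans one_pos hs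
      rw [(hderiv s hs0).deriv]
      have hs1 : 1 < s := hs
      have hls : 1 - s⁻¹ ≤ Real.log s := by
        have := Real.add_one_le_exp (-Real.log s)
        rw [Real.exp_neg, Real.exp_log hs0] at this
        linarith
      have hinv : s⁻¹ * s = 1 := inv_mul_cancel₀ (ne_of_gt hs0)
      nlinarith [mul_le_mul_of_nonneg_left hls (by linarith : (0:ℝ) ≤ 2*s - 1)]
  have h0 : f 1 = 0 := by norm_num [hf]
  have := key (Set.self_mem_Ici) ht ht
  rw [h0] at this
  exact this

lemma lemB (w : ℝ) (hw : 0 ≤ w) :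
    Real.log (w * Real.exp w + 1) ≤ 2*w + Real.exp (-w) - 1 := by
  set f : ℝ → ℝ := fun w => 2*w + Real.exp (-w) - 1 - Real.log (w * Real.exp w + 1) with hf
  have hpos : ∀ s : ℝ, 0 ≤ s → 0 < s * Real.exp s + 1 := by
    intro s hs
    positivity
  have hderiv : ∀ s : ℝ, 0 ≤ s → HasDerivAt f
      (2 + (-Real.exp (-s)) - (Real.exp s + s * Real.exp s)/(s * Real.exp s + 1)) s := by
    intro s hs
    have h1 : HasDerivAt (fun w : ℝ => Real.exp (-w)) (-Real.exp (-s)) s := by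
      have := (Real.hasDerivAt_exp (-s)).comp s (hasDerivAt_neg s)
      exact this.congr_deriv (by simp)
    have hin : HasDerivAt (fun w : ℝ => w * Real.exp w + 1)
        (1 * Real.exp s + s * Real.exp s) s :=
      ((hasDerivAt_id s).mul (Real.hasDerivAt_exp s)).add_const 1
    have h2 : HasDerivAt (fun w : ℝ => Real.log (w * Real.exp w + 1))
        ((1 * Real.exp s + s * Real.exp s)/(s * Real.exp s + 1)) s :=
      hin.log (ne_of_gt (hpos s hs))
    have h3 := ((((hasDerivAt_id s).const_mul 2).add h1).sub (hasDerivAt_const s 1)).sub h2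
    refine h3.congr_deriv ?_
    ring
  have key : MonotoneOn f (Set.Ici 0) := by
    apply monotoneOn_of_deriv_nonneg (convex_Ici 0)
    · intro s hs
      exact (hderiv s hs).continuousAt.continuousWithinAt
    · intro s hs
      rw [interior_Ici] at hs
      exact (hderiv s hs.le).differentiableAt.differentiableWithinAt
    · intro s hs
      rw [interior_Ici] at hs
      rw [(hderiv s hs.le).deriv]
      have he1 : 1 ≤ Real.exp s := Real.one_le_exp hs.le
      have hie : Real.exp (-s) * Real.exp s = 1 := by
        rw [← Real.exp_add]; simp
      have hA := lemA (Real.exp s) he1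
      rw [Real.log_exp] at hA
      have hp := hpos s hs.le
      rw [sub_nonneg, div_le_iff₀ hp]
      nlinarith [Real.exp_pos s, Real.exp_pos (-s), mul_pos (Real.exp_pos (-s)) hp]
  have h0 : f 0 = 0 := by simp [hf]
  have := key (Set.self_mem_Ici) hw hw
  rw [h0] at this
  simpa [hf] using this

/-- Elementary bound on the Lambert W function: `e^{W(x)} ≤ (2x+1)/(1+log(x+1))`
for `x ≥ 0`, where `wx = W(x)` is characterized by `wx ≥ 0` and `wx·e^{wx} = x`. -/
theorem stmt_18 (x wx : ℝ) (hx : 0 ≤ x) (hw0 : 0 ≤ wx)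
    (hw : wx * Real.exp wx = x) :
    Real.exp wx ≤ (2*x+1)/(1+Real.log (x+1)) := by
  have hlog : 0 ≤ Real.log (x+1) := Real.log_nonneg (by linarith)
  have hden : (0:ℝ) < 1 + Real.log (x+1) := by linarith
  rw [le_div_iff₀ hden]
  have hB := lemB wx hw0
  rw [hw] at hB
  have hie : Real.exp (-wx) * Real.exp wx = 1 := by
    rw [← Real.exp_add]; simp
  have hepos : (0:ℝ) < Real.exp wx := Real.exp_pos _
  nlinarith [mul_le_mul_of_nonneg_left hB hepos.le]
end
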